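/- Let A₁,…,A_N, s₁,…,s_N, k₁,…,k_N be positive integers and set E = s₁[k₁] × ⋯ × s_N[k_N] ⊆ ℤ_{A₁} × ⋯ × ℤ_{A_N}, where all points of s_j[k_j] are assumed distinct mod A_j for each j. Write A_j' = A_j / gcd(A_j, s_j). Then E is a spectral set if and only if E is a tile, and both hold precisely when k_j divides A_j' for every j = 1,…,N. -/

import Mathlib

/-- The set `E = s₁[k₁] × ⋯ × s_N[k_N]` in `ℤ_{A₁} × ⋯ × ℤ_{A_N}`,
where `s[k] = {0, s, 2s, …, (k−1)s}`. -/
def dilCube {N : ℕ} (A s k : Fin N → ℕ) : Finset (∀ j, ZMod (A j)) :=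
  Finset.image (fun v : ∀ j, Fin (k j) => fun j => (((v j : ℕ) * s j : ℕ) : ZMod (A j)))
    Finset.univ

/-- `E` tiles the abelian group `G` with translate set `T`. -/
def Tiles {G : Type*} [AddCommGroup G] (E T : Finset G) : Prop :=
  ∀ x : G, ∃! p : G × G, p.1 ∈ E ∧ p.2 ∈ T ∧ x = p.1 + p.2

/-- The character `e_λ(x) = exp(2πi Σ_j λ_j x_j / A_j)`. -/
noncomputable def ePi {N : ℕ} (A : Fin N → ℕ) (lam x : ∀ j, ZMod (A j)) : ℂ :=
  Complex.exp (2 * (Real.pi : ℂ) * Complex.I *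
    ∑ j, ((lam j).val : ℂ) * ((x j).val : ℂ) / (A j : ℂ))

/-- `Λ` is a spectrum of `E`. -/
def IsSpectrum {N : ℕ} (A : Fin N → ℕ) (E L : Finset (∀ j, ZMod (A j))) : Prop :=
  L.card = E.card ∧
  ∀ l ∈ L, ∀ m ∈ L, l ≠ m →
    ∑ x ∈ E, ePi A l x * (starRingEnd ℂ) (ePi A m x) = 0

open Finset Complex

section Helpers

section OneDim
variable (A s : ℕ)

lemma aux_Aprime_pos [NeZero A] : 0 < A / A.gcd s :=
  Nat.div_pos (Nat.le_of_dvd (Nat.pos_of_ne_zero (NeZero.ne A)) (Nat.gcd_dvd_left A s))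
    (Nat.gcd_pos_of_pos_left s (Nat.pos_of_ne_zero (NeZero.ne A)))

lemma aux_Aprime_mul_s_nat [NeZero A] : A / A.gcd s * s = A * (s / A.gcd s) := by
  set g := A.gcd s with hgdef
  have hgpos : 0 < g := Nat.gcd_pos_of_pos_left s (Nat.pos_of_ne_zero (NeZero.ne A))
  obtain ⟨u, hu⟩ : g ∣ A := Nat.gcd_dvd_left A s
  obtain ⟨t, ht⟩ : g ∣ s := Nat.gcd_dvd_right A s
  rw [hu, ht, Nat.mul_div_cancel_left u hgpos, Nat.mul_div_cancel_left t hgpos]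
  ring

lemma aux_Aprime_mul_s [NeZero A] : ((A / A.gcd s * s : ℕ) : ZMod A) = 0 := by
  rw [aux_Aprime_mul_s_nat]
  push_cast
  simp [ZMod.natCast_self]

lemma aux_int_dvd_mul_s_iff [NeZero A] (c : ℤ) :
    (A : ℤ) ∣ c * s ↔ ((A / A.gcd s : ℕ) : ℤ) ∣ c := by
  have hA : 0 < A := Nat.pos_of_ne_zero (NeZero.ne A)
  have hg : 0 < A.gcd s := Nat.gcd_pos_of_pos_left s hA
  have hAe : (A : ℤ) = ((A / A.gcd s : ℕ) : ℤ) * (A.gcd s : ℤ) := by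
    rw [← Nat.cast_mul, Nat.div_mul_cancel (Nat.gcd_dvd_left A s)]
  have hse : (s : ℤ) = ((s / A.gcd s : ℕ) : ℤ) * (A.gcd s : ℤ) := by
    rw [← Nat.cast_mul, Nat.div_mul_cancel (Nat.gcd_dvd_right A s)]
  have hgz : (A.gcd s : ℤ) ≠ 0 := by exact_mod_cast hg.ne'
  constructor
  · intro h
    rw [hAe, hse] at h
    have h2 : ((A / A.gcd s : ℕ) : ℤ) ∣ c * ((s / A.gcd s : ℕ) : ℤ) :=
      (mul_dvd_mul_iff_right hgz).mp (by rwa [← mul_assoc] at h)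
    have hco : IsCoprime ((A / A.gcd s : ℕ) : ℤ) ((s / A.gcd s : ℕ) : ℤ) :=
      Nat.isCoprime_iff_coprime.mpr (Nat.coprime_div_gcd_div_gcd hg)
    exact hco.dvd_of_dvd_mul_right h2
  · intro h
    rcases h with ⟨t, ht⟩
    rw [ht, hAe, hse]
    exact ⟨t * (s / A.gcd s : ℕ), by ring⟩

lemma aux_mul_s_inj [NeZero A] {m m' : ℕ} (hm : m < A / A.gcd s)
    (hm' : m' < A / A.gcd s) (h : ((m * s : ℕ) : ZMod A) = ((m' * s : ℕ) : ZMod A)) :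
    m = m' := by
  have h2 : m * s ≡ m' * s [MOD A] := (ZMod.natCast_eq_natCast_iff _ _ _).mp h
  have h3 : (A : ℤ) ∣ ((m' : ℤ) - m) * s := by
    have := (Nat.modEq_iff_dvd (n := A)).mp h2
    push_cast at this ⊢
    convert this using 1; ring
  have h4 := (aux_int_dvd_mul_s_iff A s _).mp h3
  have h5 : ((m' : ℤ) - m) = 0 := by
    refine Int.eq_zero_of_abs_lt_dvd h4 ?_
    rw [abs_sub_lt_iff]
    constructor <;> omega
  omega
end OneDim


open Finset Complex

noncomputable def Dsum (A s k : ℕ) (c : ℤ) : ℂ :=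
  ∑ i : Fin k, Complex.exp (2 * (Real.pi : ℂ) * Complex.I * (c * i * s) / A)

lemma aux_exp_frac_eq_one_iff (A : ℕ) [NeZero A] (m : ℤ) :
    Complex.exp (2 * (Real.pi : ℂ) * Complex.I * m / A) = 1 ↔ (A : ℤ) ∣ m := by
  have hA : (A : ℂ) ≠ 0 := Nat.cast_ne_zero.mpr (NeZero.ne A)
  have hpi : ((Real.pi : ℝ) : ℂ) ≠ 0 := Complex.ofReal_ne_zero.mpr Real.pi_ne_zero
  rw [Complex.exp_eq_one_iff]
  constructor
  · rintro ⟨n, he⟩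
    have h2 : (m : ℂ) = n * A := by
      field_simp at he
      have h3 : 2 * (Real.pi : ℂ) * Complex.I * m = 2 * (Real.pi : ℂ) * Complex.I * (n * A) := by
        rw [he]; ring
      exact mul_left_cancel₀ (by simp [hpi, Complex.I_ne_zero]) h3
    have h4 : m = n * A := by exact_mod_cast h2
    exact ⟨n, by rw [h4, mul_comm]⟩
  · rintro ⟨n, hn⟩
    refine ⟨n, ?_⟩
    rw [hn]
    push_cast
    field_simp

lemma aux_exp_congr (A : ℕ) [NeZero A] (c : ℤ) {m m' : ℕ} (h : (m : ZMod A) = (m' : ZMod A)) :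
    Complex.exp (2 * (Real.pi : ℂ) * Complex.I * (c * m) / A)
      = Complex.exp (2 * (Real.pi : ℂ) * Complex.I * (c * m') / A) := by
  have h2 : m ≡ m' [MOD A] := (ZMod.natCast_eq_natCast_iff _ _ _).mp h
  have h3 : (A : ℤ) ∣ (m' : ℤ) - m := (Nat.modEq_iff_dvd (n := A)).mp h2
  have h4 : (A : ℤ) ∣ c * ((m' : ℤ) - m) := Dvd.dvd.mul_left h3 c
  have h5 : Complex.exp (2 * (Real.pi : ℂ) * Complex.I * ((c * ((m' : ℤ) - m) : ℤ)) / A) = 1 :=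
    (aux_exp_frac_eq_one_iff A _).mpr h4
  calc Complex.exp (2 * (Real.pi : ℂ) * Complex.I * (c * m) / A)
      = Complex.exp (2 * (Real.pi : ℂ) * Complex.I * (c * m) / A)
        * Complex.exp (2 * (Real.pi : ℂ) * Complex.I * ((c * ((m' : ℤ) - m) : ℤ)) / A) := by
        rw [h5, mul_one]
    _ = Complex.exp (2 * (Real.pi : ℂ) * Complex.I * (c * m') / A) := by
        rw [← Complex.exp_add]
        congr 1
        push_cast
        ring

lemma aux_Dsum_eq_zero_iff (A s k : ℕ) [NeZero A] (hk : 0 < k) (c : ℤ) :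
    Dsum A s k c = 0 ↔ ((A : ℤ) ∣ c * s * k ∧ ¬ (A : ℤ) ∣ c * s) := by
  set ω : ℂ := Complex.exp (2 * (Real.pi : ℂ) * Complex.I * ((c * s : ℤ)) / A) with hω
  have hωe : ω = 1 ↔ (A : ℤ) ∣ c * s := by
    rw [hω]; exact aux_exp_frac_eq_one_iff A _
  have hterm : ∀ i : ℕ, Complex.exp (2 * (Real.pi : ℂ) * Complex.I * (c * i * s) / A) = ω ^ i := by
    intro i
    rw [hω, ← Complex.exp_nat_mul]
    congr 1
    push_cast
    ring
  have hD : Dsum A s k c = ∑ i ∈ range k, ω ^ i := by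
    rw [Dsum, Fin.sum_univ_eq_sum_range (fun i => Complex.exp (2 * (Real.pi : ℂ) * Complex.I * (c * i * s) / A))]
    exact Finset.sum_congr rfl fun i _ => hterm i
  have hωk : ω ^ k = 1 ↔ (A : ℤ) ∣ c * s * k := by
    have he : (2 * (Real.pi : ℂ) * Complex.I * ((c : ℂ) * k * s) / A)
        = 2 * (Real.pi : ℂ) * Complex.I * ((c * s * k : ℤ) : ℂ) / A := by
      push_cast; ring
    rw [← hterm k, he]
    exact aux_exp_frac_eq_one_iff A _
  rw [hD]
  by_cases h1 : (A : ℤ) ∣ c * s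
  · have hω1 : ω = 1 := hωe.mpr h1
    have hkc : ((k : ℂ)) ≠ 0 := Nat.cast_ne_zero.mpr hk.ne'
    simp [hω1, h1, hkc]
  · have hω1 : ω ≠ 1 := fun h => h1 (hωe.mp h)
    rw [geom_sum_eq hω1, div_eq_zero_iff]
    simp only [sub_eq_zero]
    simp [hω1, hωk, h1]

end Helpers


open Finset Complex

section Cube
variable {N : ℕ} (A s k : Fin N → ℕ)

lemma aux_pimap_inj (hdist : ∀ j, Function.Injective
      fun i : Fin (k j) => (((i : ℕ) * s j : ℕ) : ZMod (A j))) :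
    Function.Injective (fun v : ∀ j, Fin (k j) =>
      fun j => (((v j : ℕ) * s j : ℕ) : ZMod (A j))) :=
  fun v w h => funext fun j => hdist j (congrFun h j)

lemma aux_card_dilCube (hdist : ∀ j, Function.Injective
      fun i : Fin (k j) => (((i : ℕ) * s j : ℕ) : ZMod (A j))) :
    (dilCube A s k).card = ∏ j, k j := by
  rw [dilCube, Finset.card_image_of_injective _ (aux_pimap_inj A s k hdist),
    Finset.card_univ, Fintype.card_pi]
  simp

lemma aux_sum_dilCube [∀ j, NeZero (A j)] (hdist : ∀ j, Function.Injective
      fun i : Fin (k j) => (((i : ℕ) * s j : ℕ) : ZMod (A j)))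
    (lam mu : ∀ j, ZMod (A j)) :
    (∑ x ∈ dilCube A s k, ePi A lam x * (starRingEnd ℂ) (ePi A mu x))
      = ∏ j, Dsum (A j) (s j) (k j) (((lam j).val : ℤ) - ((mu j).val : ℤ)) := by
  classical
  set c : Fin N → ℤ := fun j => ((lam j).val : ℤ) - ((mu j).val : ℤ) with hc
  have hpt : ∀ x : ∀ j, ZMod (A j), ePi A lam x * (starRingEnd ℂ) (ePi A mu x)
      = ∏ j, Complex.exp (2 * (Real.pi : ℂ) * Complex.I * (c j * (((x j).val : ℕ) : ℕ)) / A j) := by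
    intro x
    rw [ePi, ePi, ← Complex.exp_conj, ← Complex.exp_add, ← Complex.exp_sum]
    congr 1
    have hconj : (starRingEnd ℂ) (2 * (Real.pi : ℂ) * Complex.I *
        ∑ j, ((mu j).val : ℂ) * ((x j).val : ℂ) / (A j : ℂ))
        = 2 * (Real.pi : ℂ) * (-Complex.I) *
          ∑ j, ((mu j).val : ℂ) * ((x j).val : ℂ) / (A j : ℂ) := by
      simp only [map_mul, map_sum, map_div₀, map_ofNat, Complex.conj_I,
        Complex.conj_ofReal, Complex.conj_natCast]
    rw [hconj, Finset.mul_sum, Finset.mul_sum, ← Finset.sum_add_distrib]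
    refine Finset.sum_congr rfl fun j _ => ?_
    rw [hc]
    push_cast
    ring
  rw [dilCube, Finset.sum_image (fun a _ b _ h => aux_pimap_inj A s k hdist h)]
  calc (∑ v : ∀ j, Fin (k j),
        ePi A lam (fun j => (((v j : ℕ) * s j : ℕ) : ZMod (A j)))
          * (starRingEnd ℂ) (ePi A mu (fun j => (((v j : ℕ) * s j : ℕ) : ZMod (A j)))))
      = ∑ v : ∀ j, Fin (k j), ∏ j,
          Complex.exp (2 * (Real.pi : ℂ) * Complex.I * (c j * (((v j : ℕ) * s j : ℕ) : ℕ)) / A j) := by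
        refine Finset.sum_congr rfl fun v _ => ?_
        rw [hpt]
        refine Finset.prod_congr rfl fun j _ => ?_
        exact aux_exp_congr (A j) (c j) (by rw [ZMod.natCast_val, ZMod.cast_id])
    _ = ∏ j, ∑ i : Fin (k j),
          Complex.exp (2 * (Real.pi : ℂ) * Complex.I * (c j * (((i : ℕ) * s j : ℕ) : ℕ)) / A j) := by
        rw [Finset.prod_univ_sum]
        rw [Fintype.piFinset_univ]
    _ = ∏ j, Dsum (A j) (s j) (k j) (c j) := by
        refine Finset.prod_congr rfl fun j _ => ?_
        rw [Dsum]
        refine Finset.sum_congr rfl fun i _ => ?_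
        congr 1
        push_cast
        ring
end Cube

section OneDimTile
variable (A s k : ℕ)

lemma aux_sum_mod (g : ℕ) (hg : 0 < g) (h : ℕ → ℕ) (c : ℕ) :
    ∑ m ∈ Finset.range (g * c), h (m % g) = c * ∑ r ∈ Finset.range g, h r := by
  induction c with
  | zero => simp
  | succ c ih =>
    have : g * (c + 1) = g * c + g := by ring
    rw [this, Finset.sum_range_add, ih]
    have h2 : ∀ i ∈ Finset.range g, h ((g * c + i) % g) = h i := by
      intro i hi
      rw [Finset.mem_range] at hi
      rw [add_comm, Nat.add_mul_mod_self_left, Nat.mod_eq_of_lt hi]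
    rw [Finset.sum_congr rfl h2]
    ring

lemma aux_one_dim_tile [NeZero A] (hs : 0 < s) (hk : 0 < k) (f : ZMod A → ℕ)
    (hf : ∀ y : ZMod A, ∑ w : Fin k, f (y - (((w : ℕ) * s : ℕ) : ZMod A)) = 1) :
    k ∣ A / A.gcd s := by
  set A' := A / A.gcd s with hA'
  have hf' : ∀ y : ZMod A, ∑ m ∈ Finset.range k, f (y - ((m * s : ℕ) : ZMod A)) = 1 := by
    intro y
    rw [← hf y]
    exact (Fin.sum_univ_eq_sum_range (fun m => f (y - ((m * s : ℕ) : ZMod A))) k).symm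
  -- step 1 : periodicity with period k*s
  obtain ⟨K, hK⟩ : ∃ K, k = K + 1 := ⟨k - 1, by omega⟩
  have hstep : ∀ y : ZMod A, f (y + (s : ZMod A)) = f (y - ((K * s : ℕ) : ZMod A)) := by
    intro y
    have e1 := hf' y
    have e2 := hf' (y + (s : ZMod A))
    rw [hK, Finset.sum_range_succ] at e1
    rw [hK, Finset.sum_range_succ'] at e2
    have h3 : ∀ m, y + (s : ZMod A) - (((m + 1) * s : ℕ) : ZMod A)
        = y - ((m * s : ℕ) : ZMod A) := by
      intro m
      push_cast
      ring
    simp only [h3, Nat.zero_mul, Nat.cast_zero, sub_zero] at e2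
    omega
  have hper : ∀ z : ZMod A, f (z + ((k * s : ℕ) : ZMod A)) = f z := by
    intro z
    have h1 := hstep (z + ((k * s : ℕ) : ZMod A) - (s : ZMod A))
    have h2 : z + ((k * s : ℕ) : ZMod A) - (s : ZMod A) + (s : ZMod A)
        = z + ((k * s : ℕ) : ZMod A) := by ring
    have h3 : z + ((k * s : ℕ) : ZMod A) - (s : ZMod A) - ((K * s : ℕ) : ZMod A) = z := by
      rw [hK]
      push_cast
      ring
    rw [h2, h3] at h1
    exact h1
  -- step 2 : invariance under ℤ-multiples of k*s
  have hper2 : ∀ (n : ℤ) (z : ZMod A), f (z + n • ((k * s : ℕ) : ZMod A)) = f z := by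
    intro n
    induction n using Int.induction_on with
    | zero => simp
    | succ n ih =>
      intro z
      have : z + ((n : ℤ) + 1) • ((k * s : ℕ) : ZMod A)
          = (z + (n : ℤ) • ((k * s : ℕ) : ZMod A)) + ((k * s : ℕ) : ZMod A) := by
        rw [add_zsmul, one_zsmul]; ring
      rw [this, hper, ih]
    | pred n ih =>
      intro z
      have h1 := hper (z + (-(n : ℤ) - 1) • ((k * s : ℕ) : ZMod A))
      have h2 : z + (-(n : ℤ) - 1) • ((k * s : ℕ) : ZMod A) + ((k * s : ℕ) : ZMod A)
          = z + (-(n : ℤ)) • ((k * s : ℕ) : ZMod A) := by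
        rw [sub_zsmul, neg_zsmul, one_zsmul]; ring
      rw [h2, ih] at h1
      exact h1.symm
  -- step 3 : invariance under g*s, g = gcd(k, A')
  set g := k.gcd A' with hg
  have hgpos : 0 < g := Nat.gcd_pos_of_pos_left _ hk
  have hcast : ((g * s : ℕ) : ZMod A) = (Nat.gcdA k A') • ((k * s : ℕ) : ZMod A) := by
    have hbez : (g : ℤ) = k * Nat.gcdA k A' + A' * Nat.gcdB k A' := Nat.gcd_eq_gcd_ab k A'
    have hz : ((g * s : ℕ) : ℤ)
        = Nat.gcdA k A' * ((k * s : ℕ) : ℤ) + Nat.gcdB k A' * ((A' * s : ℕ) : ℤ) := by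
      push_cast
      linear_combination (s : ℤ) * hbez
    have h0 : ((A' * s : ℕ) : ZMod A) = 0 := aux_Aprime_mul_s A s
    calc ((g * s : ℕ) : ZMod A) = (((g * s : ℕ) : ℤ) : ZMod A) := by push_cast; ring
      _ = ((Nat.gcdA k A' * ((k * s : ℕ) : ℤ) + Nat.gcdB k A' * ((A' * s : ℕ) : ℤ) : ℤ)
            : ZMod A) := by rw [hz]
      _ = (Nat.gcdA k A') • ((k * s : ℕ) : ZMod A)
            + (Nat.gcdB k A') • ((A' * s : ℕ) : ZMod A) := by
          push_cast [zsmul_eq_mul]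
          ring
      _ = (Nat.gcdA k A') • ((k * s : ℕ) : ZMod A) := by rw [h0]; simp
  have hgper : ∀ z : ZMod A, f (z + ((g * s : ℕ) : ZMod A)) = f z := by
    intro z
    rw [hcast]
    exact hper2 _ z
  -- step 4 : reduce m to m % g
  have hsubper : ∀ (n : ℕ) (w : ZMod A), f (w - n • ((g * s : ℕ) : ZMod A)) = f w := by
    intro n
    induction n with
    | zero => simp
    | succ n ih =>
      intro w
      have h1 := hgper (w - (n + 1) • ((g * s : ℕ) : ZMod A))
      have h2 : w - (n + 1) • ((g * s : ℕ) : ZMod A) + ((g * s : ℕ) : ZMod A)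
          = w - n • ((g * s : ℕ) : ZMod A) := by
        rw [succ_nsmul]; ring
      rw [h2, ih] at h1
      exact h1.symm
  have hmod : ∀ (y : ZMod A) (m : ℕ),
      f (y - ((m * s : ℕ) : ZMod A)) = f (y - ((m % g * s : ℕ) : ZMod A)) := by
    intro y m
    have hm : m * s = m % g * s + m / g * (g * s) := by
      have := Nat.mod_add_div m g
      calc m * s = (m % g + g * (m / g)) * s := by rw [this]
        _ = m % g * s + m / g * (g * s) := by ring
    have : y - ((m * s : ℕ) : ZMod A)
        = (y - ((m % g * s : ℕ) : ZMod A)) - (m / g) • ((g * s : ℕ) : ZMod A) := by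
      rw [hm]
      push_cast [nsmul_eq_mul]
      ring
    rw [this, hsubper]
  -- step 5 : conclude
  have hdvd : g ∣ k := Nat.gcd_dvd_left _ _
  have hkey := hf' 0
  rw [Finset.sum_congr rfl (fun m _ => hmod 0 m)] at hkey
  obtain ⟨c, hc⟩ := hdvd
  rw [hc, aux_sum_mod g hgpos (fun r => f (0 - ((r * s : ℕ) : ZMod A))) c] at hkey
  have hc1 : c = 1 := Nat.dvd_one.mp ⟨_, hkey.symm⟩
  have : k = g := by rw [hc, hc1, mul_one]
  rw [this]
  exact Nat.gcd_dvd_right _ _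
end OneDimTile

section Psi
variable (A s k : ℕ)

lemma aux_Dsum_ne_zero [NeZero A] (hk : 0 < k) (x y : ZMod A)
    (hpsi : x.val % (A / A.gcd s) / (A / A.gcd s / k.gcd (A / A.gcd s))
        = y.val % (A / A.gcd s) / (A / A.gcd s / k.gcd (A / A.gcd s))) :
    Dsum A s k ((x.val : ℤ) - (y.val : ℤ)) ≠ 0 := by
  set A' := A / A.gcd s with hA'def
  set g := k.gcd A' with hgdef
  set q := A' / g with hqdef
  have hA'pos : 0 < A' := aux_Aprime_pos A s
  have hgpos : 0 < g := Nat.gcd_pos_of_pos_left _ hk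
  have hgdvd : g ∣ A' := Nat.gcd_dvd_right k A'
  have hqpos : 0 < q := Nat.div_pos (Nat.le_of_dvd hA'pos hgdvd) hgpos
  have hqg : q * g = A' := Nat.div_mul_cancel hgdvd
  intro h0
  rw [aux_Dsum_eq_zero_iff A s k hk _] at h0
  obtain ⟨h1, h2⟩ := h0
  set c : ℤ := (x.val : ℤ) - (y.val : ℤ) with hcdef
  -- A' ∣ c * k
  have h1' : ((A' : ℕ) : ℤ) ∣ c * k := by
    rw [← aux_int_dvd_mul_s_iff A s]
    have : c * k * s = c * s * k := by ring
    rw [this]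
    exact h1
  have h2' : ¬ ((A' : ℕ) : ℤ) ∣ c := fun h => h2 ((aux_int_dvd_mul_s_iff A s c).mpr h)
  -- q ∣ c
  have hq : ((q : ℕ) : ℤ) ∣ c := by
    have hke : (k : ℤ) = ((k / g : ℕ) : ℤ) * g := by
      rw [← Nat.cast_mul, Nat.div_mul_cancel (Nat.gcd_dvd_left k A')]
    have hgz : ((g : ℕ) : ℤ) ≠ 0 := by exact_mod_cast hgpos.ne'
    have h3 : ((q : ℕ) : ℤ) * g ∣ c * (((k / g : ℕ) : ℤ) * g) := by
      rw [← hke]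
      rw [show ((q : ℕ) : ℤ) * g = ((A' : ℕ) : ℤ) by exact_mod_cast congrArg Nat.cast hqg]
      exact h1'
    have h4 : ((q : ℕ) : ℤ) ∣ c * ((k / g : ℕ) : ℤ) :=
      (mul_dvd_mul_iff_right hgz).mp (by rwa [← mul_assoc] at h3)
    have hco : IsCoprime ((q : ℕ) : ℤ) ((k / g : ℕ) : ℤ) :=
      Nat.isCoprime_iff_coprime.mpr (Nat.coprime_div_gcd_div_gcd (n := A') (m := k) hgpos).symm
    exact hco.dvd_of_dvd_mul_right h4
  -- extract div/mod data
  obtain ⟨t, ht⟩ := hq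
  have hx := Nat.div_add_mod x.val A'
  have hy := Nat.div_add_mod y.val A'
  set a := x.val % A' with hadef
  set b := y.val % A' with hbdef
  have ha := Nat.div_add_mod a q
  have hb := Nat.div_add_mod b q
  have har : a % q < q := Nat.mod_lt _ hqpos
  have hbr : b % q < q := Nat.mod_lt _ hqpos
  -- r = r'
  have h5 : ((a % q : ℕ) : ℤ) - ((b % q : ℕ) : ℤ)
      = q * (t - g * (x.val / A' : ℕ) + g * (y.val / A' : ℕ)) := by
    have hx' : ((A' : ℕ) : ℤ) * (x.val / A' : ℕ) + ((a : ℕ) : ℤ) = (x.val : ℤ) := by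
      exact_mod_cast congrArg Nat.cast hx
    have hy' : ((A' : ℕ) : ℤ) * (y.val / A' : ℕ) + ((b : ℕ) : ℤ) = (y.val : ℤ) := by
      exact_mod_cast congrArg Nat.cast hy
    have ha' : ((q : ℕ) : ℤ) * (a / q : ℕ) + ((a % q : ℕ) : ℤ) = ((a : ℕ) : ℤ) := by
      exact_mod_cast congrArg Nat.cast ha
    have hb' : ((q : ℕ) : ℤ) * (b / q : ℕ) + ((b % q : ℕ) : ℤ) = ((b : ℕ) : ℤ) := by
      exact_mod_cast congrArg Nat.cast hb
    have hqg' : ((q : ℕ) : ℤ) * g = ((A' : ℕ) : ℤ) := by exact_mod_cast congrArg Nat.cast hqg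
    have hpsi' : ((a / q : ℕ) : ℤ) = ((b / q : ℕ) : ℤ) := by exact_mod_cast hpsi
    have hc' : c = (x.val : ℤ) - (y.val : ℤ) := hcdef
    linear_combination ha' - hb' - ((q : ℕ) : ℤ) * hpsi' + hx' - hy' - hc' + ht
      + ((x.val / A' : ℕ) : ℤ) * hqg' - ((y.val / A' : ℕ) : ℤ) * hqg'
  have h6 : ((a % q : ℕ) : ℤ) - ((b % q : ℕ) : ℤ) = 0 := by
    refine Int.eq_zero_of_abs_lt_dvd ⟨_, h5⟩ ?_
    have e1 : ((a % q : ℕ) : ℤ) < ((q : ℕ) : ℤ) := by exact_mod_cast har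
    have e2 : ((b % q : ℕ) : ℤ) < ((q : ℕ) : ℤ) := by exact_mod_cast hbr
    have e3 : (0 : ℤ) ≤ ((a % q : ℕ) : ℤ) := Int.natCast_nonneg _
    have e4 : (0 : ℤ) ≤ ((b % q : ℕ) : ℤ) := Int.natCast_nonneg _
    rw [abs_sub_lt_iff]
    constructor <;> linarith
  have hrr : a % q = b % q := by exact_mod_cast sub_eq_zero.mp h6
  have hab : a = b := by rw [← ha, ← hb, hpsi, hrr]
  -- then A' ∣ c, contradiction
  apply h2'
  refine ⟨(x.val / A' : ℕ) - (y.val / A' : ℕ), ?_⟩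
  have hx' : ((A' : ℕ) : ℤ) * (x.val / A' : ℕ) + ((a : ℕ) : ℤ) = (x.val : ℤ) := by
    exact_mod_cast congrArg Nat.cast hx
  have hy' : ((A' : ℕ) : ℤ) * (y.val / A' : ℕ) + ((b : ℕ) : ℤ) = (y.val : ℤ) := by
    exact_mod_cast congrArg Nat.cast hy
  have hab' : ((a : ℕ) : ℤ) = ((b : ℕ) : ℤ) := by exact_mod_cast hab
  linear_combination -hx' + hy' + hab'
end Psi

lemma aux_prod_force {N : ℕ} (f g : Fin N → ℕ) (hle : ∀ j, g j ≤ f j)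
    (hgpos : ∀ j, 0 < g j) (h : ∏ j, f j ≤ ∏ j, g j) : ∀ j, f j = g j := by
  intro j
  by_contra hne
  have hlt : g j < f j := lt_of_le_of_ne (hle j) fun e => hne e.symm
  have hPle : ∏ i ∈ Finset.univ.erase j, g i ≤ ∏ i ∈ Finset.univ.erase j, f i :=
    Finset.prod_le_prod (fun i _ => Nat.zero_le _) (fun i _ => hle i)
  have hPpos : 0 < ∏ i ∈ Finset.univ.erase j, f i :=
    Finset.prod_pos fun i _ => lt_of_lt_of_le (hgpos i) (hle i)
  have hgeq : ∏ i, g i = g j * ∏ i ∈ Finset.univ.erase j, g i :=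
    (Finset.mul_prod_erase _ _ (Finset.mem_univ j)).symm
  have hfeq : ∏ i, f i = f j * ∏ i ∈ Finset.univ.erase j, f i :=
    (Finset.mul_prod_erase _ _ (Finset.mem_univ j)).symm
  have : ∏ i, g i < ∏ i, f i := by
    rw [hgeq, hfeq]
    calc g j * ∏ i ∈ Finset.univ.erase j, g i
        ≤ g j * ∏ i ∈ Finset.univ.erase j, f i := Nat.mul_le_mul_left _ hPle
      _ < f j * ∏ i ∈ Finset.univ.erase j, f i := (Nat.mul_lt_mul_right hPpos).mpr hlt
  omega

section Dirs
variable {N : ℕ} (A s k : Fin N → ℕ) [∀ j, NeZero (A j)]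

lemma dir_div_spec (hs : ∀ j, 0 < s j) (hk : ∀ j, 0 < k j)
    (hdist : ∀ j, Function.Injective
      fun i : Fin (k j) => (((i : ℕ) * s j : ℕ) : ZMod (A j)))
    (hdvd : ∀ j, k j ∣ A j / Nat.gcd (A j) (s j)) :
    ∃ L : Finset (∀ j, ZMod (A j)), IsSpectrum A (dilCube A s k) L := by
  classical
  set Q : Fin N → ℕ := fun j => (A j / Nat.gcd (A j) (s j)) / k j with hQ
  have hA'pos : ∀ j, 0 < A j / Nat.gcd (A j) (s j) := fun j => aux_Aprime_pos (A j) (s j)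
  have hQpos : ∀ j, 0 < Q j := fun j =>
    Nat.div_pos (Nat.le_of_dvd (hA'pos j) (hdvd j)) (hk j)
  have hQk : ∀ j, Q j * k j = A j / Nat.gcd (A j) (s j) := fun j =>
    Nat.div_mul_cancel (hdvd j)
  have hA'leA : ∀ j, A j / Nat.gcd (A j) (s j) ≤ A j := fun j => Nat.div_le_self _ _
  have hltA' : ∀ j (i : Fin (k j)), (i : ℕ) * Q j < A j / Nat.gcd (A j) (s j) := by
    intro j i
    calc (i : ℕ) * Q j < k j * Q j := (Nat.mul_lt_mul_right (hQpos j)).mpr i.isLt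
      _ = A j / Nat.gcd (A j) (s j) := by rw [mul_comm]; exact hQk j
  have hlt : ∀ j (i : Fin (k j)), (i : ℕ) * Q j < A j :=
    fun j i => Nat.lt_of_lt_of_le (hltA' j i) (hA'leA j)
  set Lmap : (∀ j, Fin (k j)) → ∀ j, ZMod (A j) :=
    fun v => fun j => (((v j : ℕ) * Q j : ℕ) : ZMod (A j)) with hLmap
  have hval : ∀ (v : ∀ j, Fin (k j)) j, (Lmap v j).val = (v j : ℕ) * Q j := by
    intro v j
    exact ZMod.val_cast_of_lt (hlt j (v j))
  have hinj : Function.Injective Lmap := by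
    intro v w h
    funext j
    have h1 : (Lmap v j).val = (Lmap w j).val := by rw [h]
    rw [hval, hval] at h1
    exact Fin.ext (Nat.eq_of_mul_eq_mul_right (hQpos j) h1)
  refine ⟨Finset.image Lmap Finset.univ, ?_, ?_⟩
  · rw [Finset.card_image_of_injective _ hinj, aux_card_dilCube A s k hdist,
      Finset.card_univ, Fintype.card_pi]
    simp
  · intro l hl m hm hne
    obtain ⟨v, _, hv⟩ := Finset.mem_image.mp hl
    obtain ⟨w, _, hw⟩ := Finset.mem_image.mp hm
    have hvw : v ≠ w := fun e => hne (by rw [← hv, ← hw, e])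
    obtain ⟨j0, hj0⟩ := Function.ne_iff.mp hvw
    rw [aux_sum_dilCube A s k hdist l m]
    apply Finset.prod_eq_zero (Finset.mem_univ j0)
    rw [aux_Dsum_eq_zero_iff (A j0) (s j0) (k j0) (hk j0)]
    set c : ℤ := ((l j0).val : ℤ) - ((m j0).val : ℤ) with hc
    have hcval : c = ((v j0 : ℕ) : ℤ) * Q j0 - ((w j0 : ℕ) : ℤ) * Q j0 := by
      rw [hc, ← hv, ← hw, hval, hval]
      push_cast
      ring
    constructor
    · -- A ∣ c * s * k
      have hAs : (A j0 / Nat.gcd (A j0) (s j0)) * s j0 = A j0 * (s j0 / Nat.gcd (A j0) (s j0)) :=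
        aux_Aprime_mul_s_nat (A j0) (s j0)
    
      refine ⟨(((v j0 : ℕ) : ℤ) - ((w j0 : ℕ) : ℤ)) * ((s j0 / Nat.gcd (A j0) (s j0) : ℕ) : ℤ), ?_⟩
      have hQk' : ((Q j0 : ℕ) : ℤ) * ((k j0 : ℕ) : ℤ)
          = ((A j0 / Nat.gcd (A j0) (s j0) : ℕ) : ℤ) := by exact_mod_cast congrArg Nat.cast (hQk j0)
      have hAs' : ((A j0 / Nat.gcd (A j0) (s j0) : ℕ) : ℤ) * ((s j0 : ℕ) : ℤ)
          = ((A j0 : ℕ) : ℤ) * ((s j0 / Nat.gcd (A j0) (s j0) : ℕ) : ℤ) := by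
        exact_mod_cast congrArg Nat.cast hAs
      rw [hcval]
      linear_combination ((((v j0 : ℕ) : ℤ) - ((w j0 : ℕ) : ℤ)) * (s j0)) * hQk'
        + ((((v j0 : ℕ) : ℤ) - ((w j0 : ℕ) : ℤ))) * hAs'
    · -- ¬ A ∣ c * s
      rw [aux_int_dvd_mul_s_iff (A j0) (s j0) c]
      intro hdvd2
      have hc0 : c = 0 := by
        refine Int.eq_zero_of_abs_lt_dvd hdvd2 ?_
        rw [hcval, abs_sub_lt_iff]
        have b1 : ((v j0 : ℕ) : ℤ) * Q j0 < ((A j0 / Nat.gcd (A j0) (s j0) : ℕ) : ℤ) := by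
          exact_mod_cast hltA' j0 (v j0)
        have b2 : ((w j0 : ℕ) : ℤ) * Q j0 < ((A j0 / Nat.gcd (A j0) (s j0) : ℕ) : ℤ) := by
          exact_mod_cast hltA' j0 (w j0)
        have b3 : (0 : ℤ) ≤ ((v j0 : ℕ) : ℤ) * Q j0 := by positivity
        have b4 : (0 : ℤ) ≤ ((w j0 : ℕ) : ℤ) * Q j0 := by positivity
        constructor <;> linarith
      rw [hcval] at hc0
      have : ((v j0 : ℕ) : ℤ) = ((w j0 : ℕ) : ℤ) := by
        have hQz : ((Q j0 : ℕ) : ℤ) ≠ 0 := by exact_mod_cast (hQpos j0).ne'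
        exact mul_right_cancel₀ hQz (sub_eq_zero.mp hc0)
      exact absurd (Fin.ext (by exact_mod_cast this)) hj0
end Dirs

section Dir2
variable {N : ℕ} (A s k : Fin N → ℕ) [∀ j, NeZero (A j)]

lemma dir_spec_div (hs : ∀ j, 0 < s j) (hk : ∀ j, 0 < k j)
    (hdist : ∀ j, Function.Injective
      fun i : Fin (k j) => (((i : ℕ) * s j : ℕ) : ZMod (A j)))
    (hspec : ∃ L : Finset (∀ j, ZMod (A j)), IsSpectrum A (dilCube A s k) L) :
    ∀ j, k j ∣ A j / Nat.gcd (A j) (s j) := by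
  classical
  obtain ⟨L, hcard, horth⟩ := hspec
  set g : Fin N → ℕ := fun j => (k j).gcd (A j / Nat.gcd (A j) (s j)) with hg
  have hgpos : ∀ j, 0 < g j := fun j => Nat.gcd_pos_of_pos_left _ (hk j)
  have hgle : ∀ j, g j ≤ k j := fun j => Nat.le_of_dvd (hk j) (Nat.gcd_dvd_left _ _)
  have hA'pos : ∀ j, 0 < A j / Nat.gcd (A j) (s j) := fun j => aux_Aprime_pos (A j) (s j)
  set q : Fin N → ℕ := fun j => (A j / Nat.gcd (A j) (s j)) / g j with hq
  have hqpos : ∀ j, 0 < q j := fun j =>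
    Nat.div_pos (Nat.le_of_dvd (hA'pos j) (Nat.gcd_dvd_right _ _)) (hgpos j)
  have hqg : ∀ j, q j * g j = A j / Nat.gcd (A j) (s j) := fun j =>
    Nat.div_mul_cancel (Nat.gcd_dvd_right _ _)
  have hpsilt : ∀ j (x : ZMod (A j)), (x.val % (A j / Nat.gcd (A j) (s j))) / q j < g j := by
    intro j x
    have h1 : x.val % (A j / Nat.gcd (A j) (s j)) < A j / Nat.gcd (A j) (s j) :=
      Nat.mod_lt _ (hA'pos j)
    rw [Nat.div_lt_iff_lt_mul (hqpos j)]
    calc x.val % (A j / Nat.gcd (A j) (s j)) < A j / Nat.gcd (A j) (s j) := h1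
      _ = g j * q j := by rw [mul_comm]; exact (hqg j).symm
  set Ψ : (∀ j, ZMod (A j)) → ∀ j, Fin (g j) :=
    fun x j => ⟨(x j).val % (A j / Nat.gcd (A j) (s j)) / q j, hpsilt j (x j)⟩ with hΨ
  have hinjon : Set.InjOn Ψ ↑L := by
    intro x hx y hy hxy
    by_contra hne
    have h0 := horth x hx y hy hne
    rw [aux_sum_dilCube A s k hdist x y] at h0
    obtain ⟨j0, _, hD0⟩ := Finset.prod_eq_zero_iff.mp h0
    have hpsieq : (x j0).val % (A j0 / Nat.gcd (A j0) (s j0)) / q j0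
        = (y j0).val % (A j0 / Nat.gcd (A j0) (s j0)) / q j0 := by
      exact congrArg Fin.val (congrFun hxy j0)
    exact aux_Dsum_ne_zero (A j0) (s j0) (k j0) (hk j0) (x j0) (y j0) hpsieq hD0
  have hle : L.card ≤ ∏ j, g j := by
    have := Finset.card_le_card_of_injOn Ψ (fun a _ => Finset.mem_univ (Ψ a)) hinjon
    calc L.card ≤ (Finset.univ : Finset (∀ j, Fin (g j))).card := this
      _ = ∏ j, g j := by rw [Finset.card_univ, Fintype.card_pi]; simp
  rw [hcard, aux_card_dilCube A s k hdist] at *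
  have hforce := aux_prod_force k g hgle hgpos (le_trans (le_of_eq hcard) hle)
  intro j
  rw [hforce j]
  exact Nat.gcd_dvd_right _ _
end Dir2

section Dir4
variable {N : ℕ} (A s k : Fin N → ℕ) [∀ j, NeZero (A j)]

lemma dir_tile_div (hs : ∀ j, 0 < s j) (hk : ∀ j, 0 < k j)
    (hdist : ∀ j, Function.Injective
      fun i : Fin (k j) => (((i : ℕ) * s j : ℕ) : ZMod (A j)))
    (htile : ∃ T : Finset (∀ j, ZMod (A j)), Tiles (dilCube A s k) T) :
    ∀ j, k j ∣ A j / Nat.gcd (A j) (s j) := by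
  classical
  obtain ⟨T, hT⟩ := htile
  intro j0
  set P : (∀ j, ZMod (A j)) → Prop := fun t => ∀ j, j ≠ j0 →
    ∃ i : Fin (k j), (0 : ZMod (A j)) = (((i : ℕ) * s j : ℕ) : ZMod (A j)) + t j with hP
  set f : ZMod (A j0) → ℕ :=
    fun z => (T.filter (fun t => t j0 = z ∧ P t)).card with hf
  refine aux_one_dim_tile (A j0) (s j0) (k j0) (hs j0) (hk j0) f ?_
  intro y
  set W : Finset (Fin (k j0) × (∀ j, ZMod (A j))) :=
    (Finset.univ ×ˢ T).filter
      (fun p => p.2 j0 = y - (((p.1 : ℕ) * s j0 : ℕ) : ZMod (A j0)) ∧ P p.2) with hW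
  have hsum : ∑ w : Fin (k j0), f (y - (((w : ℕ) * s j0 : ℕ) : ZMod (A j0))) = W.card := by
    rw [Finset.card_eq_sum_card_fiberwise (f := Prod.fst)
      (t := (Finset.univ : Finset (Fin (k j0)))) (fun p _ => Finset.mem_univ _)]
    refine Finset.sum_congr rfl fun w _ => ?_
    rw [hf]
    refine Finset.card_bij' (fun t _ => (w, t)) (fun p _ => p.2) ?_ ?_ ?_ ?_
    · intro t ht
      rw [Finset.mem_filter] at ht ⊢
      obtain ⟨htT, ht0, hPt⟩ := ht
      refine ⟨?_, rfl⟩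
      rw [hW, Finset.mem_filter, Finset.mem_product]
      exact ⟨⟨Finset.mem_univ _, htT⟩, ht0, hPt⟩
    · intro p hp
      rw [Finset.mem_filter] at hp
      obtain ⟨hpW, hpw⟩ := hp
      rw [hW, Finset.mem_filter, Finset.mem_product] at hpW
      obtain ⟨⟨_, hpT⟩, hp0, hPp⟩ := hpW
      rw [Finset.mem_filter]
      refine ⟨hpT, ?_, hPp⟩
      show p.2 j0 = y - (((w : ℕ) * s j0 : ℕ) : ZMod (A j0))
      rw [hpw] at hp0
      exact hp0
    · intro t ht
      rfl
    · intro p hp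
      rw [Finset.mem_filter] at hp
      obtain ⟨_, hpw⟩ := hp
      show (w, p.2) = p
      rw [← hpw]
  have hone : W.card = 1 := by
    obtain ⟨p, hp, hpu⟩ := hT (Pi.single j0 y)
    obtain ⟨hpE, hpT, hpsum⟩ := hp
    obtain ⟨v, _, hv⟩ := Finset.mem_image.mp hpE
    have hpj0 : p.2 j0 = y - (((v j0 : ℕ) * s j0 : ℕ) : ZMod (A j0)) := by
      have h1 := congrFun hpsum j0
      have h2 : p.1 j0 = (((v j0 : ℕ) * s j0 : ℕ) : ZMod (A j0)) := by rw [← hv]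
      rw [Pi.single_eq_same, Pi.add_apply, h2] at h1
      rw [h1]
      ring
    have hPp : P p.2 := by
      intro j hj
      refine ⟨v j, ?_⟩
      have h1 := congrFun hpsum j
      have h2 : p.1 j = (((v j : ℕ) * s j : ℕ) : ZMod (A j)) := by rw [← hv]
      rw [Pi.single_eq_of_ne hj, Pi.add_apply, h2] at h1
      exact h1
    have hwitmem : (v j0, p.2) ∈ W := by
      rw [hW, Finset.mem_filter, Finset.mem_product]
      exact ⟨⟨Finset.mem_univ _, hpT⟩, hpj0, hPp⟩
    have huniq : ∀ w' ∈ W, w' = (v j0, p.2) := by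
      rintro ⟨w, t⟩ hmem
      rw [hW, Finset.mem_filter, Finset.mem_product] at hmem
      obtain ⟨⟨_, htT⟩, ht0, hPt⟩ := hmem
      dsimp only at htT ht0 hPt
      have hex : ∀ j, ∃ i : Fin (k j),
          (Pi.single (M := fun j => ZMod (A j)) j0 y) j
            = (((i : ℕ) * s j : ℕ) : ZMod (A j)) + t j := by
        intro j
        by_cases hj : j = j0
        · subst hj
          refine ⟨w, ?_⟩
          rw [Pi.single_eq_same, ht0]
          ring
        · obtain ⟨i, hi⟩ := hPt j hj
          exact ⟨i, by rw [Pi.single_eq_of_ne hj]; exact hi⟩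
      choose v' hv' using hex
      have hpair : ((fun j => (((v' j : ℕ) * s j : ℕ) : ZMod (A j))), t) = p := by
        apply hpu
        refine ⟨Finset.mem_image.mpr ⟨v', Finset.mem_univ _, rfl⟩, htT, ?_⟩
        funext j
        rw [Pi.add_apply]
        exact hv' j
      have ht2 : t = p.2 := congrArg Prod.snd hpair
      have hw1 : (((w : ℕ) * s j0 : ℕ) : ZMod (A j0))
          = (((v' j0 : ℕ) * s j0 : ℕ) : ZMod (A j0)) := by
        have h1 := hv' j0
        rw [Pi.single_eq_same, ht0] at h1
        linear_combination h1
      have hwv : w = v' j0 := hdist j0 hw1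
      have hv0 : v' j0 = v j0 := by
        have h1 := congrFun (congrArg Prod.fst hpair) j0
        have h2 : p.1 j0 = (((v j0 : ℕ) * s j0 : ℕ) : ZMod (A j0)) := by rw [← hv]
        rw [h2] at h1
        exact hdist j0 h1
      rw [Prod.ext_iff]
      exact ⟨by simp [hwv, hv0], ht2⟩
    rw [Finset.card_eq_one]
    exact ⟨_, Finset.eq_singleton_iff_unique_mem.mpr ⟨hwitmem, huniq⟩⟩
  rw [hsum, hone]
end Dir4

section Decomp
variable (A s k : ℕ)

lemma aux_decomp [NeZero A] (hs : 0 < s) (hk : 0 < k) (hdvd : k ∣ A / A.gcd s) :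
    ∀ y : ZMod A, ∃! q : Fin k × Fin (A / A.gcd s / k) × Fin (A.gcd s),
      y = (((q.1 : ℕ) * s + (q.2.1 : ℕ) * (k * s) + (q.2.2 : ℕ) : ℕ) : ZMod A) := by
  have hApos : 0 < A := Nat.pos_of_ne_zero (NeZero.ne A)
  have hdpos : 0 < A.gcd s := Nat.gcd_pos_of_pos_left s hApos
  have hA'pos : 0 < A / A.gcd s := aux_Aprime_pos A s
  have hdA : A.gcd s ∣ A := Nat.gcd_dvd_left A s
  obtain ⟨s1, hs1⟩ := Nat.gcd_dvd_right A s
  have hA'k : k * (A / A.gcd s / k) = A / A.gcd s := Nat.mul_div_cancel' hdvd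
  have hA'd : A / A.gcd s * A.gcd s = A := Nat.div_mul_cancel hdA
  set φ : Fin k × Fin (A / A.gcd s / k) × Fin (A.gcd s) → ZMod A :=
    fun q => (((q.1 : ℕ) * s + (q.2.1 : ℕ) * (k * s) + (q.2.2 : ℕ) : ℕ) : ZMod A) with hφ
  have hmodd : ∀ (i b r : ℕ), (i * s + b * (k * s) + r) % A.gcd s = r % A.gcd s := by
    intro i b r
    have h1 : i * s + b * (k * s) + r = r + ((i + b * k) * s1) * A.gcd s := by
      conv_lhs => rw [hs1]
      ring
    rw [h1, Nat.add_mul_mod_self_right]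
  have hinj : Function.Injective φ := by
    rintro ⟨i, b, r⟩ ⟨i', b', r'⟩ h
    rw [hφ] at h
    dsimp only at h
    have hmod : ((i : ℕ) * s + (b : ℕ) * (k * s) + (r : ℕ))
        ≡ ((i' : ℕ) * s + (b' : ℕ) * (k * s) + (r' : ℕ)) [MOD A] :=
      (ZMod.natCast_eq_natCast_iff _ _ _).mp h
    have hrr : (r : ℕ) = (r' : ℕ) := by
      have h2 := (Nat.ModEq.of_dvd hdA hmod)
      unfold Nat.ModEq at h2
      rw [hmodd, hmodd] at h2
      rwa [Nat.mod_eq_of_lt r.isLt, Nat.mod_eq_of_lt r'.isLt] at h2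
    have hmod2 : ((i : ℕ) + (b : ℕ) * k) * s ≡ ((i' : ℕ) + (b' : ℕ) * k) * s [MOD A] := by
      have h3 : ((i : ℕ) + (b : ℕ) * k) * s + (r : ℕ)
          ≡ ((i' : ℕ) + (b' : ℕ) * k) * s + (r : ℕ) [MOD A] := by
        have e1 : ((i : ℕ) + (b : ℕ) * k) * s + (r : ℕ)
            = (i : ℕ) * s + (b : ℕ) * (k * s) + (r : ℕ) := by ring
        have e2 : ((i' : ℕ) + (b' : ℕ) * k) * s + (r : ℕ)
            = (i' : ℕ) * s + (b' : ℕ) * (k * s) + (r' : ℕ) := by rw [hrr]; ring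
        rw [e1, e2]
        exact hmod
      exact Nat.ModEq.add_right_cancel' _ h3
    have hblt : ∀ (bb : Fin (A / A.gcd s / k)) (ii : Fin k),
        (ii : ℕ) + (bb : ℕ) * k < A / A.gcd s := by
      intro bb ii
      have e1 : (ii : ℕ) + (bb : ℕ) * k < ((bb : ℕ) + 1) * k := by
        have := ii.isLt
        calc (ii : ℕ) + (bb : ℕ) * k < k + (bb : ℕ) * k := Nat.add_lt_add_right ii.isLt _
          _ = ((bb : ℕ) + 1) * k := by ring
      have e2 : ((bb : ℕ) + 1) * k ≤ (A / A.gcd s / k) * k :=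
        Nat.mul_le_mul_right k bb.isLt
      calc (ii : ℕ) + (bb : ℕ) * k < ((bb : ℕ) + 1) * k := e1
        _ ≤ (A / A.gcd s / k) * k := e2
        _ = A / A.gcd s := by rw [mul_comm]; exact hA'k
    have hmm : (i : ℕ) + (b : ℕ) * k = (i' : ℕ) + (b' : ℕ) * k := by
      refine aux_mul_s_inj A s (hblt b i) (hblt b' i') ?_
      exact (ZMod.natCast_eq_natCast_iff _ _ _).mpr hmod2
    have hii : (i : ℕ) = (i' : ℕ) := by
      have e1 : ((i : ℕ) + (b : ℕ) * k) % k = (i : ℕ) := by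
        rw [Nat.add_mul_mod_self_right, Nat.mod_eq_of_lt i.isLt]
      have e2 : ((i' : ℕ) + (b' : ℕ) * k) % k = (i' : ℕ) := by
        rw [Nat.add_mul_mod_self_right, Nat.mod_eq_of_lt i'.isLt]
      rw [← e1, ← e2, hmm]
    have hbb : (b : ℕ) = (b' : ℕ) := by
      have e1 : ((i : ℕ) + (b : ℕ) * k) / k = (b : ℕ) := by
        rw [Nat.add_mul_div_right _ _ hk, Nat.div_eq_of_lt i.isLt, zero_add]
      have e2 : ((i' : ℕ) + (b' : ℕ) * k) / k = (b' : ℕ) := by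
        rw [Nat.add_mul_div_right _ _ hk, Nat.div_eq_of_lt i'.isLt, zero_add]
      rw [← e1, ← e2, hmm]
    exact Prod.ext (Fin.ext hii) (Prod.ext (Fin.ext hbb) (Fin.ext hrr))
  have hcard : Fintype.card (Fin k × Fin (A / A.gcd s / k) × Fin (A.gcd s))
      = Fintype.card (ZMod A) := by
    rw [Fintype.card_prod, Fintype.card_prod, Fintype.card_fin, Fintype.card_fin,
      Fintype.card_fin, ZMod.card, ← mul_assoc, hA'k, hA'd]
  have hbij : Function.Bijective φ :=
    (Fintype.bijective_iff_injective_and_card φ).mpr ⟨hinj, hcard⟩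
  intro y
  obtain ⟨q, hq, hqu⟩ := hbij.existsUnique y
  exact ⟨q, hq.symm, fun q' hq' => hqu q' hq'.symm⟩
end Decomp

section Dir3
variable {N : ℕ} (A s k : Fin N → ℕ) [∀ j, NeZero (A j)]

lemma dir_div_tile (hs : ∀ j, 0 < s j) (hk : ∀ j, 0 < k j)
    (hdvd : ∀ j, k j ∣ A j / Nat.gcd (A j) (s j)) :
    ∃ T : Finset (∀ j, ZMod (A j)), Tiles (dilCube A s k) T := by
  classical
  have hq := fun j => aux_decomp (A j) (s j) (k j) (hs j) (hk j) (hdvd j)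
  set Tmap : (∀ j, Fin (A j / Nat.gcd (A j) (s j) / k j) × Fin (Nat.gcd (A j) (s j)))
      → ∀ j, ZMod (A j) :=
    fun u => fun j => ((((u j).1 : ℕ) * (k j * s j) + ((u j).2 : ℕ) : ℕ) : ZMod (A j)) with hTmap
  refine ⟨Finset.image Tmap Finset.univ, ?_⟩
  intro x
  choose q hqeq hquniq using fun j => hq j (x j)
  refine ⟨(fun j => ((((q j).1 : ℕ) * s j : ℕ) : ZMod (A j)),
    fun j => ((((q j).2.1 : ℕ) * (k j * s j) + ((q j).2.2 : ℕ) : ℕ) : ZMod (A j))),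
    ⟨?_, ?_, ?_⟩, ?_⟩
  · exact Finset.mem_image.mpr ⟨fun j => (q j).1, Finset.mem_univ _, rfl⟩
  · exact Finset.mem_image.mpr ⟨fun j => (q j).2, Finset.mem_univ _, rfl⟩
  · funext j
    rw [Pi.add_apply, hqeq j]
    push_cast
    ring
  · rintro ⟨e', t'⟩ ⟨he', ht', hx'⟩
    dsimp only at he' ht' hx'
    obtain ⟨v, _, hv⟩ := Finset.mem_image.mp he'
    obtain ⟨u, _, hu⟩ := Finset.mem_image.mp ht'
    have hkey : ∀ j, ((v j, u j) :
        Fin (k j) × Fin (A j / Nat.gcd (A j) (s j) / k j) × Fin (Nat.gcd (A j) (s j)))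
        = q j := by
      intro j
      refine hquniq j _ ?_
      show x j = _
      rw [congrFun hx' j, Pi.add_apply]
      have h2 : e' j = (((v j : ℕ) * s j : ℕ) : ZMod (A j)) := by rw [← hv]
      have h3 : t' j = ((((u j).1 : ℕ) * (k j * s j) + ((u j).2 : ℕ) : ℕ) : ZMod (A j)) := by
        rw [← hu]
      rw [h2, h3]
      push_cast
      ring
    have hv2 : ∀ j, v j = (q j).1 := fun j => congrArg Prod.fst (hkey j)
    have hu2 : ∀ j, u j = (q j).2 := fun j => congrArg Prod.snd (hkey j)
    have h1 : e' = fun j => ((((q j).1 : ℕ) * s j : ℕ) : ZMod (A j)) := by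
      rw [← hv]
      funext j
      rw [hv2 j]
    have h2 : t' = fun j => ((((q j).2.1 : ℕ) * (k j * s j) + ((q j).2.2 : ℕ) : ℕ)
        : ZMod (A j)) := by
      rw [← hu, hTmap]
      funext j
      dsimp only
      rw [hu2 j]
    simp only [Prod.mk.injEq]
    exact ⟨h1, h2⟩
end Dir3

/-- The dilated cube `E = s₁[k₁] × ⋯ × s_N[k_N]` is spectral iff it is a tile, and this
happens exactly when `k_j ∣ A_j' = A_j/(A_j,s_j)` for all `j`. -/
theorem dilated_cube_spectral_iff_tile {N : ℕ} (A s k : Fin N → ℕ) [∀ j, NeZero (A j)]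
    (hs : ∀ j, 0 < s j) (hk : ∀ j, 0 < k j)
    (hdist : ∀ j, Function.Injective
      fun i : Fin (k j) => (((i : ℕ) * s j : ℕ) : ZMod (A j))) :
    ((∃ L : Finset (∀ j, ZMod (A j)), IsSpectrum A (dilCube A s k) L) ↔
        (∃ T : Finset (∀ j, ZMod (A j)), Tiles (dilCube A s k) T)) ∧
    ((∃ L : Finset (∀ j, ZMod (A j)), IsSpectrum A (dilCube A s k) L) ↔
        ∀ j, k j ∣ A j / Nat.gcd (A j) (s j)) := by
  have hdiv_spec := dir_div_spec A s k hs hk hdist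
  have hspec_div := dir_spec_div A s k hs hk hdist
  have hdiv_tile := dir_div_tile A s k hs hk
  have htile_div := dir_tile_div A s k hs hk hdist
  exact ⟨⟨fun h => hdiv_tile (hspec_div h), fun h => hdiv_spec (htile_div h)⟩,
    ⟨hspec_div, hdiv_spec⟩⟩
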